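/- Define the constants ν₀ = 10⁷/(4π), q₁ = 200, q₂ = 1/1000, and ν̂(s) = ν₀ − (ν₀ − q₁)·exp(−q₂ s⁶). Then the map s ↦ ν̂(s)s is strongly monotone on [0,∞) with constant q₁: for all s, t ≥ 0, (ν̂(s)s − ν̂(t)t)(s − t) ≥ q₁ (s − t)². -/
import Mathlib


/-- `ν₀ = 10⁷/(4π)`. -/
noncomputable def ν₀ : ℝ := 10 ^ 7 / (4 * Real.pi)

/-- `q₁ = 200`. -/
def q₁ : ℝ := 200

/-- `q₂ = 1/1000`. -/
noncomputable def q₂ : ℝ := 1 / 1000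

/-- The reluctivity function `ν̂(s) = ν₀ − (ν₀ − q₁) exp(−q₂ s⁶)`. -/
noncomputable def ν' (s : ℝ) : ℝ := ν₀ - (ν₀ - q₁) * Real.exp (-q₂ * s ^ 6)

lemma nu0_ge : q₁ ≤ ν₀ := by
  have hpi : Real.pi ≤ 4 := Real.pi_le_four
  have hpos : 0 < 4 * Real.pi := by positivity
  rw [q₁, ν₀, le_div_iff₀ hpos]
  nlinarith [Real.pi_pos]

lemma g_mono {s t : ℝ} (ht : 0 ≤ t) (hts : t ≤ s) :
    t * (1 - Real.exp (-q₂ * t ^ 6)) ≤ s * (1 - Real.exp (-q₂ * s ^ 6)) := by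
  have hq : (0:ℝ) < q₂ := by norm_num [q₂]
  have h6 : t ^ 6 ≤ s ^ 6 := pow_le_pow_left₀ ht hts 6
  have hexp : Real.exp (-q₂ * s ^ 6) ≤ Real.exp (-q₂ * t ^ 6) := by
    apply Real.exp_le_exp.mpr; nlinarith
  have hle1 : Real.exp (-q₂ * t ^ 6) ≤ 1 := by
    rw [Real.exp_le_one_iff]; nlinarith [pow_nonneg ht 6]
  apply mul_le_mul hts (by linarith) (by linarith) (le_trans ht hts)

lemma key (s t : ℝ) (hs : 0 ≤ s) (ht : 0 ≤ t) (hts : t ≤ s) :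
    (ν' s * s - ν' t * t) * (s - t) ≥ q₁ * (s - t) ^ 2 := by
  have h := g_mono ht hts
  have h0 := nu0_ge
  have hd : ν' s * s - ν' t * t - q₁ * (s - t)
      = (ν₀ - q₁) * (s * (1 - Real.exp (-q₂ * s ^ 6)) - t * (1 - Real.exp (-q₂ * t ^ 6))) := by
    simp only [ν']; ring
  nlinarith [mul_nonneg (sub_nonneg.mpr h0) (sub_nonneg.mpr h), sub_nonneg.mpr hts]

/-- The map `s ↦ ν̂(s)s` is strongly monotone on `[0,∞)` with constant `q₁`. -/
theorem stmt11 : ∀ s t : ℝ, 0 ≤ s → 0 ≤ t →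
    (ν' s * s - ν' t * t) * (s - t) ≥ q₁ * (s - t) ^ 2 := by
  intro s t hs ht
  rcases le_total t s with h | h
  · exact key s t hs ht h
  · have := key t s ht hs h
    nlinarith [this]
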